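/- Let R be an object unital G-graded ring and let M, N, P be graded left R-modules with R-linear maps f : M → P, g : N → P, h : M → N such that f = g ∘ h. If f and g are graded maps, then there exists a graded map h' : M → N with f = g ∘ h'; if f and h are graded maps, then there exists a graded map g' : N → P with f = g' ∘ h. -/

import Mathlib

open CategoryTheory

/-- The arrows of a groupoid, bundled with their endpoints. -/
abbrev GArrow (G : Type*) [Groupoid G] := Σ a b : G, a ⟶ b

namespace GArrow

variable {G : Type*} [Groupoid G]

/-- The unit arrow at an object. -/
def unit (a : G) : GArrow G := ⟨a, a, 𝟙 a⟩

/-- The inverse arrow `σ⁻¹`. -/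
def ginv (σ : GArrow G) : GArrow G := ⟨σ.2.1, σ.1, Groupoid.inv σ.2.2⟩

/-- `Composable σ τ` means `d(σ) = r(τ)`, i.e. the product `στ` is defined. -/
def Composable (σ τ : GArrow G) : Prop := σ.1 = τ.2.1

/-- The product `στ` when `d(σ) = r(τ)`. -/
def comp (σ τ : GArrow G) (h : Composable σ τ) : GArrow G :=
  ⟨τ.1, σ.2.1, τ.2.2 ≫ eqToHom h.symm ≫ σ.2.2⟩

/-- The unit space `G₀`, as a set of arrows. -/
def GUnits (G : Type*) [Groupoid G] : Set (GArrow G) := Set.range unit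

/-- The product of two sets of arrows: `Σ * Σ' = { στ : σ ∈ Σ, τ ∈ Σ', d(σ) = r(τ) }`. -/
def setMul (A B : Set (GArrow G)) : Set (GArrow G) :=
  {ρ | ∃ σ ∈ A, ∃ τ ∈ B, ∃ h : Composable σ τ, ρ = comp σ τ h}

end GArrow

/-- An object unital `G`-grading on an associative, not necessarily unital, ring `R`:
`R = ⊕_{σ ∈ G} R_σ`, `R_σ R_τ ⊆ R_{στ}` for composable pairs, `R_σ R_τ = 0` otherwise,
each `R_e` (`e ∈ G₀`) is unital with identity `u e`, and
`1_{R_{r(σ)}} r = r 1_{R_{d(σ)}} = r` for every `r ∈ R_σ`. -/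
structure OUGrading (G : Type*) [Groupoid G] (R : Type*) [NonUnitalRing R] where
  component : GArrow G → AddSubgroup R
  sup_eq_top : (⨆ σ : GArrow G, component σ) = ⊤
  indep : iSupIndep component
  mul_mem : ∀ (σ τ : GArrow G) (h : GArrow.Composable σ τ), ∀ r ∈ component σ,
    ∀ s ∈ component τ, r * s ∈ component (GArrow.comp σ τ h)
  mul_eq_zero : ∀ (σ τ : GArrow G), ¬ GArrow.Composable σ τ → ∀ r ∈ component σ,
    ∀ s ∈ component τ, r * s = 0
  /-- The identity of the unital ring `R_e`, for each object (unit) `e`. -/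
  u : G → R
  u_mem : ∀ a : G, u a ∈ component (GArrow.unit a)
  u_left : ∀ σ : GArrow G, ∀ r ∈ component σ, u σ.2.1 * r = r
  u_right : ∀ σ : GArrow G, ∀ r ∈ component σ, r * u σ.1 = r

/-- The axioms of a left module over a not necessarily unital ring. -/
structure NUModule (R M : Type*) [NonUnitalRing R] [AddCommGroup M] [SMul R M] : Prop where
  smul_add : ∀ (r : R) (m n : M), r • (m + n) = r • m + r • n
  add_smul : ∀ (r s : R) (m : M), (r + s) • m = r • m + s • m
  mul_smul : ∀ (r s : R) (m : M), (r * s) • m = r • (s • m)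

/-- A `G`-graded left module over a ring `R` with object unital `G`-grading `gr`. -/
structure GrModule {G : Type*} [Groupoid G] {R : Type*} [NonUnitalRing R]
    (gr : OUGrading G R) (M : Type*) [AddCommGroup M] [SMul R M] where
  smul_add : ∀ (r : R) (m n : M), r • (m + n) = r • m + r • n
  add_smul : ∀ (r s : R) (m : M), (r + s) • m = r • m + s • m
  mul_smul : ∀ (r s : R) (m : M), (r * s) • m = r • (s • m)
  component : GArrow G → AddSubgroup M
  sup_eq_top : (⨆ σ : GArrow G, component σ) = ⊤
  indep : iSupIndep component
  smul_mem : ∀ (σ τ : GArrow G) (h : GArrow.Composable σ τ), ∀ r ∈ gr.component σ,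
    ∀ m ∈ component τ, r • m ∈ component (GArrow.comp σ τ h)
  smul_eq_zero : ∀ (σ τ : GArrow G), ¬ GArrow.Composable σ τ → ∀ r ∈ gr.component σ,
    ∀ m ∈ component τ, r • m = 0

/-- A graded module is graded unital if `1_{R_{r(σ)}} • m = m` for all homogeneous `m`
of degree `σ`. -/
def GrModule.IsUnital {G : Type*} [Groupoid G] {R : Type*} [NonUnitalRing R]
    {gr : OUGrading G R} {M : Type*} [AddCommGroup M] [SMul R M]
    (gm : GrModule gr M) : Prop :=
  ∀ σ : GArrow G, ∀ m ∈ gm.component σ, gr.u σ.2.1 • m = m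

/-- A graded homomorphism between graded modules with homogeneous components `cM`, `cN`. -/
def IsGrHom {G : Type*} [Groupoid G] {R : Type*} [NonUnitalRing R]
    {M N : Type*} [AddCommGroup M] [AddCommGroup N] [SMul R M] [SMul R N]
    (cM : GArrow G → AddSubgroup M) (cN : GArrow G → AddSubgroup N) (f : M → N) : Prop :=
  (∀ x y : M, f (x + y) = f x + f y) ∧ (∀ (r : R) (x : M), f (r • x) = r • f x) ∧
    (∀ σ : GArrow G, ∀ x ∈ cM σ, f x ∈ cN σ)

/-- A graded submodule: an additive subgroup closed under the `R`-action which is the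
sum of its homogeneous components. -/
def IsGrSubmodule {G : Type*} [Groupoid G] {R : Type*} [NonUnitalRing R]
    {gr : OUGrading G R} {M : Type*} [AddCommGroup M] [SMul R M]
    (gm : GrModule gr M) (N : AddSubgroup M) : Prop :=
  (∀ (r : R), ∀ m ∈ N, r • m ∈ N) ∧ N = ⨆ σ : GArrow G, (N ⊓ gm.component σ)

open Classical in
/-- The homogeneous component of degree `τ` of the `σ'`-suspension `R(σ')`:
`R(σ')_τ = R_{τσ'}` if `(τ, σ')` is composable and `{0}` otherwise. -/
noncomputable def suspComponent {G : Type*} [Groupoid G] {R : Type*} [NonUnitalRing R]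
    (gr : OUGrading G R) (σ' τ : GArrow G) : AddSubgroup R :=
  if h : GArrow.Composable τ σ' then gr.component (GArrow.comp τ σ' h) else ⊥

/-- The `σ'`-suspension `R(σ') = ⊕_τ R(σ')_τ` of `R`, as an additive subgroup of `R`. -/
noncomputable def suspension {G : Type*} [Groupoid G] {R : Type*} [NonUnitalRing R]
    (gr : OUGrading G R) (σ' : GArrow G) : AddSubgroup R :=
  ⨆ τ : GArrow G, suspComponent gr σ' τ

/-- A graded homomorphism from a graded left ideal `S` of `R` (with homogeneous
components `cS`) to a graded module with components `cN`. -/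
def IsGrHomOn {G : Type*} [Groupoid G] {R N : Type*} [NonUnitalRing R]
    [AddCommGroup N] [SMul R N] {S : AddSubgroup R}
    (cS : GArrow G → AddSubgroup R) (cN : GArrow G → AddSubgroup N) (f : ↥S → N) : Prop :=
  (∀ x y : ↥S, f (x + y) = f x + f y) ∧
  (∀ (r : R) (x y : ↥S), (y : R) = r * (x : R) → f y = r • f x) ∧
  (∀ τ : GArrow G, ∀ x : ↥S, (x : R) ∈ cS τ → f x ∈ cN τ)

/-- A graded module is free by suspension if it is the internal direct sum of graded
submodules, each gradedly isomorphic to a suspension `R(σᵢ)` of `R`. -/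
noncomputable def FreeBySuspension {G : Type*} [Groupoid G] {R : Type*} [NonUnitalRing R]
    {gr : OUGrading G R} {M : Type*} [AddCommGroup M] [SMul R M]
    (gm : GrModule gr M) : Prop :=
  ∃ (ι : Type*) (σs : ι → GArrow G) (f : ∀ i : ι, ↥(suspension gr (σs i)) → M),
    (∀ i : ι, IsGrHomOn (suspComponent gr (σs i)) gm.component (f i)) ∧
    (∀ i : ι, Function.Injective (f i)) ∧
    iSupIndep (fun i : ι => AddSubgroup.closure (Set.range (f i))) ∧
    (⨆ i : ι, AddSubgroup.closure (Set.range (f i))) = ⊤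

/-- The set of graded homomorphisms `R → N` of degree `σ`. -/
def HomDeg {G : Type*} [Groupoid G] {R N : Type*} [NonUnitalRing R]
    [AddCommGroup N] [SMul R N] (gr : OUGrading G R)
    (cN : GArrow G → AddSubgroup N) (σ : GArrow G) : Set (R → N) :=
  {f | (∀ x y : R, f (x + y) = f x + f y) ∧ (∀ r x : R, f (r * x) = r • f x) ∧
    (∀ (τ : GArrow G) (h : GArrow.Composable τ σ), ∀ x ∈ gr.component τ,
        f x ∈ cN (GArrow.comp τ σ h)) ∧
    (∀ τ : GArrow G, ¬ GArrow.Composable τ σ → ∀ x ∈ gr.component τ, f x = 0)}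

/-- `HOM_R(R, N) = ⊕_σ HOM_R(R, N)_σ`, the additive group generated by the graded
homomorphisms of some degree. -/
def HOM {G : Type*} [Groupoid G] {R N : Type*} [NonUnitalRing R]
    [AddCommGroup N] [SMul R N] (gr : OUGrading G R)
    (cN : GArrow G → AddSubgroup N) : AddSubgroup (R → N) :=
  AddSubgroup.closure (⋃ σ : GArrow G, HomDeg gr cN σ)

/-- The left `R`-action `(r · f)(x) = f(x r)` on maps `R → N`. -/
def rAct {R N : Type*} [NonUnitalRing R] (r : R) (f : R → N) : R → N :=
  fun x => f (x * r)

/-- `R · HOM_R(R, N)`, the unitary part of `HOM_R(R, N)` under the action `rAct`. -/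
def RHOM {G : Type*} [Groupoid G] {R N : Type*} [NonUnitalRing R]
    [AddCommGroup N] [SMul R N] (gr : OUGrading G R)
    (cN : GArrow G → AddSubgroup N) : AddSubgroup (R → N) :=
  AddSubgroup.closure {g | ∃ (r : R), ∃ f ∈ HOM gr cN, g = rAct r f}

/-- A bundled graded unital left `R`-module. -/
structure GrUMod {G : Type*} [Groupoid G] {R : Type*} [NonUnitalRing R]
    (gr : OUGrading G R) where
  carrier : Type*
  [acg : AddCommGroup carrier]
  [sm : SMul R carrier]
  str : GrModule gr carrier
  unital : str.IsUnital

attribute [instance] GrUMod.acg GrUMod.sm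

section Stmt12Aux

open DirectSum

theorem myIsInternal {ι M : Type*} [DecidableEq ι] [AddCommGroup M] (A : ι → AddSubgroup M)
    (hind : iSupIndep A) (htop : (⨆ i, A i) = ⊤) : DirectSum.IsInternal A := by
  have h : DirectSum.IsInternal (fun i => (A i).toIntSubmodule) := by
    rw [DirectSum.isInternal_submodule_iff_iSupIndep_and_iSup_eq_top]
    constructor
    · exact hind.map_orderIso AddSubgroup.toIntSubmodule
    · rw [← OrderIso.map_iSup, htop]; rfl
  exact h

theorem GArrow.comp_right_inj {G : Type*} [Groupoid G] {ρ τ σ : GArrow G}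
    (h1 : GArrow.Composable ρ τ) (h2 : GArrow.Composable ρ σ)
    (he : GArrow.comp ρ τ h1 = GArrow.comp ρ σ h2) : τ = σ := by
  obtain ⟨a, b, φ⟩ := ρ
  obtain ⟨c, d, ψ⟩ := τ
  obtain ⟨e, k, χ⟩ := σ
  obtain rfl : a = d := h1
  obtain rfl : a = k := h2
  simp only [GArrow.comp] at he
  obtain ⟨rfl, he2⟩ := Sigma.mk.inj_iff.mp he
  obtain ⟨-, he3⟩ := Sigma.mk.inj_iff.mp (eq_of_heq he2)
  have hm := eq_of_heq he3
  simp only [eqToHom_refl, Category.id_comp] at hm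
  rw [cancel_mono φ] at hm
  rw [hm]

variable {G : Type*} [Groupoid G] {R : Type*} [NonUnitalRing R] {gr : OUGrading G R}
variable {A B : Type*} [AddCommGroup A] [SMul R A] [AddCommGroup B] [SMul R B]

theorem aux_smul_zero (gm : GrModule gr A) (r : R) : r • (0:A) = 0 := by
  have h := gm.smul_add r 0 0
  rw [add_zero] at h
  exact (left_eq_add.mp h)

theorem aux_zero_smul (gm : GrModule gr A) (x : A) : (0:R) • x = 0 := by
  have h := gm.add_smul 0 0 x
  rw [add_zero] at h
  exact (left_eq_add.mp h)

theorem aux_decompose_smul [DecidableEq (GArrow G)] (gm : GrModule gr A) [DirectSum.Decomposition gm.component]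
    {ρ : GArrow G} {r : R} (hr : r ∈ gr.component ρ) (σ : GArrow G)
    (hc : GArrow.Composable ρ σ) (n : A) :
    (decompose gm.component (r • n) (GArrow.comp ρ σ hc) : A)
      = r • (decompose gm.component n σ : A) := by
  revert n
  refine DirectSum.Decomposition.inductionOn gm.component ?_ ?_ ?_
  · rw [aux_smul_zero gm, decompose_zero, DirectSum.zero_apply, DirectSum.zero_apply,
      ZeroMemClass.coe_zero, ZeroMemClass.coe_zero, aux_smul_zero gm]
  · intro τ m
    by_cases hτ : τ = σ
    · subst hτ
      rw [decompose_coe, of_eq_same,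
        decompose_of_mem_same gm.component (gm.smul_mem ρ τ hc r hr m m.2)]
    · rw [decompose_coe, of_eq_of_ne _ _ _ (Ne.symm hτ), ZeroMemClass.coe_zero, aux_smul_zero gm]
      by_cases hcτ : GArrow.Composable ρ τ
      · exact decompose_of_mem_ne gm.component (gm.smul_mem ρ τ hcτ r hr m m.2)
          (fun hh => hτ (GArrow.comp_right_inj hcτ hc hh))
      · rw [gm.smul_eq_zero ρ τ hcτ r hr m m.2, decompose_zero, DirectSum.zero_apply,
          ZeroMemClass.coe_zero]
  · intro m m' hm hm'
    rw [gm.smul_add, decompose_add, DirectSum.add_apply, AddSubgroup.coe_add, hm, hm',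
      decompose_add, DirectSum.add_apply, AddSubgroup.coe_add, gm.smul_add]

theorem aux_map_decompose [DecidableEq (GArrow G)] (gmA : GrModule gr A) (gmB : GrModule gr B)
    [DirectSum.Decomposition gmA.component] [DirectSum.Decomposition gmB.component]
    (g : A →+ B) (hg : ∀ σ : GArrow G, ∀ x ∈ gmA.component σ, g x ∈ gmB.component σ)
    (σ : GArrow G) (n : A) :
    g (decompose gmA.component n σ : A) = (decompose gmB.component (g n) σ : B) := by
  revert n
  refine DirectSum.Decomposition.inductionOn gmA.component ?_ ?_ ?_
  · simp
  · intro τ m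
    by_cases hτ : τ = σ
    · subst hτ
      rw [decompose_coe, of_eq_same, decompose_of_mem_same gmB.component (hg τ m m.2)]
    · rw [decompose_coe, of_eq_of_ne _ _ _ (Ne.symm hτ), ZeroMemClass.coe_zero, map_zero,
        decompose_of_mem_ne gmB.component (hg τ m m.2) hτ]
  · intro m m' hm hm'
    rw [decompose_add, DirectSum.add_apply, AddSubgroup.coe_add, map_add, hm, hm', map_add,
      decompose_add, DirectSum.add_apply, AddSubgroup.coe_add]

theorem aux_smul_hom [DecidableEq (GArrow G)] (gmA : GrModule gr A) (gmB : GrModule gr B)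
    [DirectSum.Decomposition gr.component] [DirectSum.Decomposition gmA.component]
    (k : A →+ B)
    (hgr : ∀ σ : GArrow G, ∀ x ∈ gmA.component σ, k x ∈ gmB.component σ)
    (hkey : ∀ (ρ σ : GArrow G), GArrow.Composable ρ σ → ∀ r ∈ gr.component ρ,
       ∀ x ∈ gmA.component σ, k (r • x) = r • k x)
    (r : R) (x : A) : k (r • x) = r • k x := by
  have H : ∀ (x : A) (r : R), k (r • x) = r • k x := by
    refine DirectSum.Decomposition.inductionOn gmA.component
      (motive := fun x => ∀ r : R, k (r • x) = r • k x) ?_ ?_ ?_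
    · intro r
      rw [aux_smul_zero gmA, map_zero, aux_smul_zero gmB]
    · intro σ m
      refine DirectSum.Decomposition.inductionOn gr.component ?_ ?_ ?_
      · rw [aux_zero_smul gmA, map_zero, aux_zero_smul gmB]
      · intro ρ r'
        by_cases hc : GArrow.Composable ρ σ
        · exact hkey ρ σ hc r' r'.2 m m.2
        · rw [gmA.smul_eq_zero ρ σ hc r' r'.2 m m.2, map_zero,
            gmB.smul_eq_zero ρ σ hc r' r'.2 (k m) (hgr σ m m.2)]
      · intro r r' h1 h2
        rw [gmA.add_smul, map_add, h1, h2, gmB.add_smul]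
    · intro m m' hm hm' r
      rw [gmA.smul_add, map_add, hm r, hm' r, map_add, gmB.smul_add]
  exact H x r

end Stmt12Aux

/-- (Graded factorization lemma.) If `f = g ∘ h` with `f, g, h`
`R`-linear: when `f` and `g` are graded there is a graded `h'` with `f = g ∘ h'`;
when `f` and `h` are graded there is a graded `g'` with `f = g' ∘ h`. -/
theorem stmt12 {G R M N P : Type*} [Groupoid G] [NonUnitalRing R]
    [AddCommGroup M] [AddCommGroup N] [AddCommGroup P] [SMul R M] [SMul R N] [SMul R P]
    (gr : OUGrading G R) (gmM : GrModule gr M) (gmN : GrModule gr N) (gmP : GrModule gr P)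
    (f : M → P) (g : N → P) (h : M → N)
    (hfl : (∀ x y : M, f (x + y) = f x + f y) ∧ ∀ (r : R) (x : M), f (r • x) = r • f x)
    (hgl : (∀ x y : N, g (x + y) = g x + g y) ∧ ∀ (r : R) (x : N), g (r • x) = r • g x)
    (hhl : (∀ x y : M, h (x + y) = h x + h y) ∧ ∀ (r : R) (x : M), h (r • x) = r • h x)
    (hfac : ∀ m : M, f m = g (h m)) :
    ((∀ σ : GArrow G, ∀ x ∈ gmM.component σ, f x ∈ gmP.component σ) →
      (∀ σ : GArrow G, ∀ x ∈ gmN.component σ, g x ∈ gmP.component σ) →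
      ∃ h' : M → N, IsGrHom (R := R) gmM.component gmN.component h' ∧ ∀ m : M, f m = g (h' m)) ∧
    ((∀ σ : GArrow G, ∀ x ∈ gmM.component σ, f x ∈ gmP.component σ) →
      (∀ σ : GArrow G, ∀ x ∈ gmM.component σ, h x ∈ gmN.component σ) →
      ∃ g' : N → P, IsGrHom (R := R) gmN.component gmP.component g' ∧ ∀ m : M, f m = g' (h m)) := by
  classical
  letI : DirectSum.Decomposition gr.component :=
    (myIsInternal gr.component gr.indep gr.sup_eq_top).chooseDecomposition
  letI : DirectSum.Decomposition gmM.component :=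
    (myIsInternal gmM.component gmM.indep gmM.sup_eq_top).chooseDecomposition
  letI : DirectSum.Decomposition gmN.component :=
    (myIsInternal gmN.component gmN.indep gmN.sup_eq_top).chooseDecomposition
  letI : DirectSum.Decomposition gmP.component :=
    (myIsInternal gmP.component gmP.indep gmP.sup_eq_top).chooseDecomposition
  let fH : M →+ P := AddMonoidHom.mk' f hfl.1
  let gH : N →+ P := AddMonoidHom.mk' g hgl.1
  let hH : M →+ N := AddMonoidHom.mk' h hhl.1
  constructor
  · intro hf hg
    let K : ∀ σ : GArrow G, gmM.component σ →+ N := fun σ =>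
      AddMonoidHom.mk' (fun x => (DirectSum.decompose gmN.component (h (x : M)) σ : N))
        (by intro x y
            dsimp only
            rw [AddSubgroup.coe_add, hhl.1, DirectSum.decompose_add, DirectSum.add_apply,
              AddSubgroup.coe_add])
    let h'H : M →+ N :=
      (DirectSum.toAddMonoid K).comp (DirectSum.decomposeAddEquiv gmM.component).toAddMonoidHom
    have hkey : ∀ σ : GArrow G, ∀ m ∈ gmM.component σ,
        h'H m = (DirectSum.decompose gmN.component (h m) σ : N) := by
      intro σ m hm
      show DirectSum.toAddMonoid K ((DirectSum.decomposeAddEquiv gmM.component) m) = _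
      rw [DirectSum.decomposeAddEquiv_apply, DirectSum.decompose_of_mem _ hm,
        DirectSum.toAddMonoid_of]
      rfl
    have hgrade : ∀ σ : GArrow G, ∀ m ∈ gmM.component σ, h'H m ∈ gmN.component σ := by
      intro σ m hm
      rw [hkey σ m hm]
      exact SetLike.coe_mem _
    refine ⟨h'H, ⟨h'H.map_add, ?_, hgrade⟩, ?_⟩
    · intro r x
      refine aux_smul_hom gmM gmN h'H hgrade ?_ r x
      intro ρ σ hc r hr m hm
      rw [hkey _ _ (gmM.smul_mem ρ σ hc r hr m hm), hkey σ m hm, hhl.2]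
      exact aux_decompose_smul gmN hr σ hc (h m)
    · have hall : ∀ m : M, fH m = (gH.comp h'H) m := by
        refine DirectSum.Decomposition.inductionOn gmM.component ?_ ?_ ?_
        · simp
        · intro σ m
          show f (m : M) = gH (h'H (m : M))
          rw [hkey σ m m.2]
          calc f (m : M)
              = (DirectSum.decompose gmP.component (f (m : M)) σ : P) :=
                (DirectSum.decompose_of_mem_same _ (hf σ m m.2)).symm
            _ = (DirectSum.decompose gmP.component (gH (h (m : M))) σ : P) := by
                rw [show gH (h (m : M)) = g (h (m : M)) from rfl, ← hfac]
            _ = gH (DirectSum.decompose gmN.component (h (m : M)) σ : N) :=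
                (aux_map_decompose gmN gmP gH hg σ (h (m : M))).symm
        · intro m m' hm hm'
          rw [map_add, map_add, hm, hm']
      exact fun m => hall m
  · intro hf hh
    let K : ∀ σ : GArrow G, gmN.component σ →+ P := fun σ =>
      AddMonoidHom.mk' (fun x => (DirectSum.decompose gmP.component (g (x : N)) σ : P))
        (by intro x y
            dsimp only
            rw [AddSubgroup.coe_add, hgl.1, DirectSum.decompose_add, DirectSum.add_apply,
              AddSubgroup.coe_add])
    let g'H : N →+ P :=
      (DirectSum.toAddMonoid K).comp (DirectSum.decomposeAddEquiv gmN.component).toAddMonoidHom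
    have hkey : ∀ σ : GArrow G, ∀ n ∈ gmN.component σ,
        g'H n = (DirectSum.decompose gmP.component (g n) σ : P) := by
      intro σ n hn
      show DirectSum.toAddMonoid K ((DirectSum.decomposeAddEquiv gmN.component) n) = _
      rw [DirectSum.decomposeAddEquiv_apply, DirectSum.decompose_of_mem _ hn,
        DirectSum.toAddMonoid_of]
      rfl
    have hgrade : ∀ σ : GArrow G, ∀ n ∈ gmN.component σ, g'H n ∈ gmP.component σ := by
      intro σ n hn
      rw [hkey σ n hn]
      exact SetLike.coe_mem _
    refine ⟨g'H, ⟨g'H.map_add, ?_, hgrade⟩, ?_⟩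
    · intro r x
      refine aux_smul_hom gmN gmP g'H hgrade ?_ r x
      intro ρ σ hc r hr n hn
      rw [hkey _ _ (gmN.smul_mem ρ σ hc r hr n hn), hkey σ n hn, hgl.2]
      exact aux_decompose_smul gmP hr σ hc (g n)
    · have hall : ∀ m : M, fH m = (g'H.comp hH) m := by
        refine DirectSum.Decomposition.inductionOn gmM.component ?_ ?_ ?_
        · simp
        · intro σ m
          show f (m : M) = g'H (h (m : M))
          rw [hkey σ (h (m : M)) (hh σ m m.2), ← hfac]
          exact (DirectSum.decompose_of_mem_same _ (hf σ m m.2)).symm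
        · intro m m' hm hm'
          rw [map_add, map_add, hm, hm']
      exact fun m => hall m
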